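/- Let α : ℝ^p × ℝ^q → ℝ and β : ℝ^p × ℝ^q × ℝ^{p+q} → ℝ be continuous on compact boxes, and let g(w,u,ξ) = α(w,u) + β(w,u,ξ). Let I_α = [a̲, ā] be an interval such that for all a ∈ I_α and all w ∈ x_A there is a continuous selection u(w,a) ∈ x_E with α(w, u(w,a)) = a (continuous in a). Let O_β = [b̲, b̄] be a compact interval containing β(w,u,ξ) for all (w,u,ξ) ∈ x_A × x_E × x. If a̲ + b̄ ≤ ā + b̲, then the interval I_g = [a̲ + b̄, ā + b̲] satisfies: for all z ∈ I_g, all w ∈ x_A, and all ξ ∈ x, there exists u ∈ x_E with g(w,u,ξ) = z. -/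
import Mathlib


/-- Theorem 5 of the paper: if `I_α = [a̲,ā]` under-approximates the robust range of `α`
with a continuous selection `usel`, and `O_β = [b̲,b̄]` over-approximates the range of
`β`, then `[a̲+b̄, ā+b̲]` (when nonempty) under-approximates the robust range of
`g = α + β` with respect to `w` and `ξ`. -/
theorem decomposition_under_approx {p q : ℕ}
    (α : (Fin p → ℝ) × (Fin q → ℝ) → ℝ)
    (β : (Fin p → ℝ) × (Fin q → ℝ) × ((Fin p → ℝ) × (Fin q → ℝ)) → ℝ)
    (loA hiA : Fin p → ℝ) (loE hiE : Fin q → ℝ)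
    (hA : loA ≤ hiA) (hE : loE ≤ hiE)
    (alo ahi blo bhi : ℝ)
    (hα : ContinuousOn α (Set.Icc loA hiA ×ˢ Set.Icc loE hiE))
    (hβ : ContinuousOn β
      (Set.Icc loA hiA ×ˢ Set.Icc loE hiE ×ˢ (Set.Icc loA hiA ×ˢ Set.Icc loE hiE)))
    -- continuous selection witnessing that I_α under-approximates the robust range of α
    (usel : (Fin p → ℝ) → ℝ → (Fin q → ℝ))
    (huselcont : ∀ w ∈ Set.Icc loA hiA, ContinuousOn (usel w) (Set.Icc alo ahi))
    (huselmaps : ∀ w ∈ Set.Icc loA hiA, ∀ a ∈ Set.Icc alo ahi,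
      usel w a ∈ Set.Icc loE hiE)
    (huselsel : ∀ w ∈ Set.Icc loA hiA, ∀ a ∈ Set.Icc alo ahi, α (w, usel w a) = a)
    -- O_β over-approximates the range of β
    (hOβ : ∀ w ∈ Set.Icc loA hiA, ∀ u ∈ Set.Icc loE hiE,
      ∀ ξ ∈ Set.Icc loA hiA ×ˢ Set.Icc loE hiE, β (w, u, ξ) ∈ Set.Icc blo bhi)
    (hne : alo + bhi ≤ ahi + blo) :
    ∀ z ∈ Set.Icc (alo + bhi) (ahi + blo), ∀ w ∈ Set.Icc loA hiA,
      ∀ ξ ∈ Set.Icc loA hiA ×ˢ Set.Icc loE hiE,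
        ∃ u ∈ Set.Icc loE hiE, α (w, u) + β (w, u, ξ) = z := by
  intro z hz w hw ξ hξ
  -- nonemptiness facts
  have hloA : loA ∈ Set.Icc loA hiA := ⟨le_refl _, hA⟩
  have hloE : loE ∈ Set.Icc loE hiE := ⟨le_refl _, hE⟩
  have hbb : blo ≤ bhi := by
    have := hOβ loA hloA loE hloE (loA, loE) ⟨hloA, hloE⟩
    exact le_trans this.1 this.2
  -- for b ∈ [blo,bhi], z - b ∈ [alo,ahi]
  have hzb : ∀ b ∈ Set.Icc blo bhi, z - b ∈ Set.Icc alo ahi := by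
    rintro b ⟨hb1, hb2⟩
    constructor <;> [linarith [hz.1]; linarith [hz.2]]
  -- the map f b = β (w, usel w (z-b), ξ)
  set f : ℝ → ℝ := fun b => β (w, usel w (z - b), ξ) with hf
  have hfmaps : ∀ b ∈ Set.Icc blo bhi, f b ∈ Set.Icc blo bhi := fun b hb =>
    hOβ w hw _ (huselmaps w hw _ (hzb b hb)) ξ hξ
  have hfcont : ContinuousOn f (Set.Icc blo bhi) := by
    apply hβ.comp
    · apply ContinuousOn.prodMk continuousOn_const
      apply ContinuousOn.prodMk
      · exact (huselcont w hw).comp (continuousOn_const.sub continuousOn_id) hzb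
      · exact continuousOn_const
    · intro b hb
      exact ⟨hw, huselmaps w hw _ (hzb b hb), hξ⟩
  -- IVT for g b = f b - b
  set g : ℝ → ℝ := fun b => f b - b with hg
  have hgcont : ContinuousOn g (Set.Icc blo bhi) := hfcont.sub continuousOn_id
  have h0 : (0 : ℝ) ∈ Set.Icc (g bhi) (g blo) := by
    have h1 := hfmaps blo ⟨le_refl _, hbb⟩
    have h2 := hfmaps bhi ⟨hbb, le_refl _⟩
    exact ⟨by simpa [hg] using sub_nonpos.2 h2.2, by simpa [hg] using sub_nonneg.2 h1.1⟩
  obtain ⟨b, hb, hgb⟩ := intermediate_value_Icc' hbb hgcont h0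
  have hfb : f b = b := by have : f b - b = 0 := hgb; linarith
  refine ⟨usel w (z - b), huselmaps w hw _ (hzb b hb), ?_⟩
  rw [huselsel w hw _ (hzb b hb)]
  simp only [hf] at hfb
  rw [hfb]; ring
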